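/- Let D be the dictionary formed by the q+1 mutually unbiased bases B_b (b ∈ F_q ∪ {∞}) constructed from the net and permuted Hadamard matrix. Define the (q+1)-sparse vector x whose block indexed by b ∈ F_q is e_{b²} ⊗ e_b, and whose block indexed by ∞ is −e_0 ⊗ e_0. Then Dx = 0; in particular the spark of D is at most q+1. -/
import Mathlib


/-- For the dictionary `D` of the `q+1` mutually unbiased bases `B_b`
(`b ∈ F_q ∪ {∞}`) and the `(q+1)`-sparse vector `x` with block `e_{b²} ⊗ e_b` at
`b ∈ F_q` and block `−e_0 ⊗ e_0` at `∞`, one has `Dx = 0`; in particular the spark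
of `D` is at most `q+1`. -/
theorem explicit_null_vector (m : ℕ) (hm : 0 < m)
    (F : Type) [Field F] [Fintype F] [DecidableEq F]
    (hF : Fintype.card F = 2 ^ m)
    (Ht : F → F → ℝ)
    (hrow0 : ∀ j : F, Ht 0 j = 1)
    (hcol0 : ∀ i : F, Ht i 0 = 1)
    (hneg : ∀ i j₁ j₂ : F, i ≠ 0 → j₁ + j₂ = i → Ht i j₁ = - Ht i j₂) :
    let q : ℝ := Fintype.card F
    let D : (F × F) → (Option F × F × F) → ℝ := fun p c =>
      match c with
      | (some b, j, v) => if p.2 = b * p.1 + j then Ht p.1 v / Real.sqrt q else 0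
      | (none, j, v) => if p.1 = j then Ht p.2 v / Real.sqrt q else 0
    let x : (Option F × F × F) → ℝ := fun c =>
      match c with
      | (some b, j, v) => if j = b * b ∧ v = b then 1 else 0
      | (none, j, v) => if j = 0 ∧ v = 0 then -1 else 0
    x ≠ 0 ∧
    (Finset.univ.filter fun c => x c ≠ 0).card = 2 ^ m + 1 ∧
    (∀ p : F × F, ∑ c : Option F × F × F, D p c * x c = 0) := by
  intro q D x
  -- characteristic 2
  have h2 : (2 : F) = 0 := by
    have hc : ((Fintype.card F : ℕ) : F) = 0 := FiniteField.cast_card_eq_zero F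
    rw [hF] at hc
    push_cast at hc
    exact pow_eq_zero_iff hm.ne' |>.mp hc
  -- squaring is injective
  have hsqinj : Function.Injective (fun b : F => b * b) := by
    intro a b h
    simp only at h
    have hab : (a + b) * (a + b) = 0 := by linear_combination h + (b * b + a * b) * h2
    have hab0 : a + b = 0 := by
      rcases mul_eq_zero.mp hab with h' | h' <;> exact h'
    have hbb : -b = b := by linear_combination (-b) * h2
    rw [← hbb]
    exact eq_neg_of_add_eq_zero_left hab0
  have hsqbij : Function.Bijective (fun b : F => b * b) :=
    (Finite.injective_iff_bijective).mp hsqinj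
  -- the embedding of the support
  set e : Option F → Option F × F × F := fun o =>
    match o with
    | none => (none, 0, 0)
    | some b => (some b, b * b, b) with he
  have heinj : Function.Injective e := by
    intro o₁ o₂ h
    match o₁, o₂ with
    | none, none => rfl
    | none, some b => simp [he] at h
    | some a, none => simp [he] at h
    | some a, some b => simp [he] at h; exact congrArg some h.1
  have hsupp : (Finset.univ.filter fun c => x c ≠ 0) = Finset.univ.image e := by
    ext c
    simp only [Finset.mem_filter, Finset.mem_univ, true_and, Finset.mem_image]
    constructor
    · intro hc
      match c with
      | (none, j, v) =>
        simp only [x] at hc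
        by_cases hjv : j = 0 ∧ v = 0
        · exact ⟨none, by simp [he, hjv.1, hjv.2]⟩
        · simp [hjv] at hc
      | (some b, j, v) =>
        simp only [x] at hc
        by_cases hjv : j = b * b ∧ v = b
        · exact ⟨some b, by simp [he, hjv.1, hjv.2]⟩
        · simp [hjv] at hc
    · rintro ⟨o, rfl⟩
      match o with
      | none => simp [he, x]
      | some b => simp [he, x]
  refine ⟨?_, ?_, ?_⟩
  · intro h
    have := congrFun h (none, 0, 0)
    simp [x] at this
  · rw [hsupp, Finset.card_image_of_injective _ heinj, Finset.card_univ,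
      Fintype.card_option, hF]
  · intro p
    -- key sum identity
    have key : ∀ u w : F,
        (∑ b : F, if w = b * u + b * b then Ht u b else 0) = if u = 0 then 1 else 0 := by
      intro u w
      by_cases hu : u = 0
      · subst hu
        obtain ⟨b₀, hb₀⟩ := hsqbij.surjective w
        simp only at hb₀
        have : ∀ b : F, (w = b * 0 + b * b) ↔ (b = b₀) := by
          intro b
          constructor
          · intro h
            apply hsqinj
            simp only
            rw [hb₀, h]; ring
          · rintro rfl; rw [← hb₀]; ring
        simp only [this, hrow0, if_pos rfl, Finset.sum_ite_eq', Finset.mem_univ, if_true]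
      · rw [if_neg hu]
        apply Finset.sum_involution (fun b _ => b + u)
        · intro b _
          have hcond : (w = (b + u) * u + (b + u) * (b + u)) ↔ (w = b * u + b * b) := by
            constructor <;> intro h <;> rw [h]
            · linear_combination (b * u + u * u) * h2
            · linear_combination (-(b * u) - u * u) * h2
          rw [iff_comm] at hcond
          by_cases hw : w = b * u + b * b
          · rw [if_pos hw, if_pos (hcond.mp hw)]
            have hsum : b + (b + u) = u := by linear_combination b * h2
            have := hneg u b (b + u) hu hsum
            linarith [this]
          · rw [if_neg hw, if_neg (fun h => hw (hcond.mpr h))]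
            ring
        · intro b _ _
          intro h
          exact hu (by linear_combination h)
        · intro b _; exact Finset.mem_univ _
        · intro b _
          have : u + u = 0 := by linear_combination u * h2
          rw [add_assoc, this, add_zero]
    -- rewrite the sum over the support
    have hzero : ∀ c ∈ (Finset.univ : Finset (Option F × F × F)),
        c ∉ Finset.univ.image e → D p c * x c = 0 := by
      intro c _ hc
      rw [← hsupp] at hc
      simp only [Finset.mem_filter, Finset.mem_univ, true_and, not_not] at hc
      rw [hc, mul_zero]
    have hstep : (∑ c : Option F × F × F, D p c * x c)
        = ∑ o : Option F, D p (e o) * x (e o) := by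
      rw [← Finset.sum_subset (Finset.subset_univ (Finset.univ.image e)) hzero,
        Finset.sum_image (fun a _ b _ h => heinj h)]
    rw [hstep, Fintype.sum_option]
    simp only [he, x, D, hcol0, if_pos rfl, and_self, if_true, mul_one, mul_neg, mul_one]
    have hdiv : ∀ b : F, (if p.2 = b * p.1 + b * b then Ht p.1 b / Real.sqrt q else 0)
        = (if p.2 = b * p.1 + b * b then Ht p.1 b else 0) / Real.sqrt q := by
      intro b; split_ifs <;> simp
    rw [Finset.sum_congr rfl (fun b _ => hdiv b), ← Finset.sum_div, key p.1 p.2]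
    split_ifs <;> ring
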